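/- arXiv:1507.01069 — 3 statements merged into one kernel-verified Lean document; each statement's English description precedes it below -/
import Mathlib

section
/- Let $r : [0,1] \to \mathbb{R}$ be continuously differentiable with $r(0) = 0$, and suppose $\int_0^1 (r(x)-x)^2\,dx < \infty$ and $\int_0^1 x^2 (r'(x)-1)^2\,dx < \infty$. Then for every $x \in [0,1]$, $$x\,(r(x)-x)^2 \le \int_0^1 (r(y)-y)^2\,dy + 2\left(\int_0^1 (r(y)-y)^2\,dy\right)^{1/2}\left(\int_0^1 y^2 (r'(y)-1)^2\,dy\right)^{1/2}.$$ -/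
open MeasureTheory Set intervalIntegral

theorem pointwise_weighted_estimate (r : ℝ → ℝ)
    (hr : ContDiffOn ℝ 1 r (Icc 0 1)) (hr0 : r 0 = 0)
    (h1 : IntegrableOn (fun y : ℝ => (r y - y) ^ 2) (Icc 0 1))
    (h2 : IntegrableOn (fun y : ℝ => y ^ 2 * (deriv r y - 1) ^ 2) (Icc 0 1)) :
    ∀ x ∈ Icc (0:ℝ) 1,
      x * (r x - x) ^ 2
        ≤ (∫ y in (0:ℝ)..1, (r y - y) ^ 2)
          + 2 * Real.sqrt (∫ y in (0:ℝ)..1, (r y - y) ^ 2)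
            * Real.sqrt (∫ y in (0:ℝ)..1, y ^ 2 * (deriv r y - 1) ^ 2) := by
  intro x hx
  obtain ⟨hx0, hx1⟩ := hx
  set μ := volume.restrict (Icc (0:ℝ) 1) with hμ
  set u : ℝ → ℝ := fun y => r y - y with hu
  set v : ℝ → ℝ := fun y => y * (deriv r y - 1) with hv
  have hrc : ContinuousOn r (Icc 0 1) := hr.continuousOn
  have hum : AEStronglyMeasurable u μ :=
    (hrc.sub continuousOn_id).aestronglyMeasurable measurableSet_Icc
  have hvmeas : Measurable v := measurable_id.mul ((measurable_deriv r).sub measurable_const)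
  have hvm : AEStronglyMeasurable v μ := hvmeas.aestronglyMeasurable
  have h1' : Integrable (fun y => u y ^ 2) μ := h1
  have h1on : IntegrableOn (fun y => u y ^ 2) (Icc 0 1) := h1
  have h2' : Integrable (fun y => v y ^ 2) μ := by
    have : (fun y => v y ^ 2) = fun y : ℝ => y ^ 2 * (deriv r y - 1) ^ 2 := by
      funext y; simp [hv, mul_pow]
    rw [this]; exact h2
  have hu2 : MemLp u 2 μ := (memLp_two_iff_integrable_sq hum).2 h1'
  have hv2 : MemLp v 2 μ := (memLp_two_iff_integrable_sq hvm).2 h2'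
  -- the product u * v is integrable
  have huv : Integrable (fun y => v y * u y) μ := by
    have h := hv2.smul (p := 2) (q := 2) (r := 1) hu2
    rw [memLp_one_iff_integrable] at h
    exact h.congr (Filter.Eventually.of_forall fun y => mul_comm (u y) (v y))
  -- Cauchy-Schwarz
  have huvOn : IntegrableOn (fun y => v y * u y) (Icc 0 1) := huv
  have hA : (0:ℝ) ≤ ∫ y, u y ^ 2 ∂μ := integral_nonneg fun y => sq_nonneg _
  have hB : (0:ℝ) ≤ ∫ y, v y ^ 2 ∂μ := integral_nonneg fun y => sq_nonneg _
  have hCS : ∫ y, |u y| * |v y| ∂μ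
      ≤ Real.sqrt (∫ y, u y ^ 2 ∂μ) * Real.sqrt (∫ y, v y ^ 2 ∂μ) := by
    have hpq : Real.HolderConjugate 2 2 := Real.HolderConjugate.two_two
    have h2e : ENNReal.ofReal (2:ℝ) = 2 := by norm_num
    have h := integral_mul_norm_le_Lp_mul_Lq (μ := μ) hpq (h2e ▸ hu2) (h2e ▸ hv2)
    have e1 : ∀ w : ℝ → ℝ, (fun a => ‖w a‖ ^ (2:ℝ)) = fun a => w a ^ 2 := by
      intro w; funext a
      rw [show (2:ℝ) = ((2:ℕ):ℝ) by norm_num, Real.rpow_natCast, Real.norm_eq_abs, sq_abs]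
    rw [e1 u, e1 v] at h
    calc ∫ y, |u y| * |v y| ∂μ = ∫ y, ‖u y‖ * ‖v y‖ ∂μ := by
          simp only [Real.norm_eq_abs]
      _ ≤ (∫ y, u y ^ 2 ∂μ) ^ ((1:ℝ)/2) * (∫ y, v y ^ 2 ∂μ) ^ ((1:ℝ)/2) := h
      _ = Real.sqrt (∫ y, u y ^ 2 ∂μ) * Real.sqrt (∫ y, v y ^ 2 ∂μ) := by
          rw [Real.sqrt_eq_rpow, Real.sqrt_eq_rpow]
  -- FTC: x * u x ^ 2 = ∫_0^x (u^2 + 2 v u)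
  have hder : ∀ y ∈ Ioo (0:ℝ) x,
      HasDerivAt (fun y => y * (r y - y) ^ 2) (u y ^ 2 + 2 * (v y * u y)) y := by
    intro y hy
    have hy1 : y < 1 := lt_of_lt_of_le hy.2 hx1
    have hmem : Icc (0:ℝ) 1 ∈ nhds y := Icc_mem_nhds hy.1 hy1
    have hd : HasDerivAt r (deriv r y) y :=
      (((hr.differentiableOn one_ne_zero) y ⟨hy.1.le, hy1.le⟩).differentiableAt hmem).hasDerivAt
    have h : HasDerivAt (fun y => y * (r y - y) ^ 2)
        (1 * (r y - y) ^ 2 + y * (((2:ℕ):ℝ) * (r y - y) ^ (2 - 1) * (deriv r y - 1))) y :=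
      (hasDerivAt_id y).mul ((hd.sub (hasDerivAt_id y)).pow 2)
    convert h using 1
    simp only [hu, hv, id_eq]
    norm_num
    ring
  -- interval integrability pieces
  have hsub : Ioc (0:ℝ) x ⊆ Icc 0 1 := fun y hy => ⟨hy.1.le, hy.2.trans hx1⟩
  have hi1x : IntervalIntegrable (fun y => u y ^ 2) volume 0 x :=
    (intervalIntegrable_iff_integrableOn_Ioc_of_le hx0).2 (h1on.mono_set hsub)
  have hiuv1 : IntervalIntegrable (fun y => v y * u y) volume 0 1 :=
    (intervalIntegrable_iff_integrableOn_Ioc_of_le zero_le_one).2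
      (huvOn.mono_set Ioc_subset_Icc_self)
  have hiuvx : IntervalIntegrable (fun y => v y * u y) volume 0 x :=
    (intervalIntegrable_iff_integrableOn_Ioc_of_le hx0).2 (huvOn.mono_set hsub)
  have hiabs : IntervalIntegrable (fun y => |u y| * |v y|) volume 0 1 := by
    have : (fun y => |u y| * |v y|) = fun y => |v y * u y| := by
      funext y; rw [abs_mul (v y) (u y), mul_comm]
    rw [this]; exact hiuv1.abs
  have hiabsx : IntervalIntegrable (fun y => |u y| * |v y|) volume 0 x := by
    have : (fun y => |u y| * |v y|) = fun y => |v y * u y| := by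
      funext y; rw [abs_mul (v y) (u y), mul_comm]
    rw [this]; exact hiuvx.abs
  have hint : IntervalIntegrable (fun y => u y ^ 2 + 2 * (v y * u y)) volume 0 x :=
    hi1x.add ((hiuvx.const_mul 2))
  have hftc : ∫ y in (0:ℝ)..x, (u y ^ 2 + 2 * (v y * u y)) = x * (r x - x) ^ 2 := by
    have h := integral_eq_sub_of_hasDeriv_right_of_le hx0
      (f := fun y => y * (r y - y) ^ 2)
      (f' := fun y => u y ^ 2 + 2 * (v y * u y))
      (by
        exact (continuousOn_id.mul (((hrc.mono (Icc_subset_Icc le_rfl hx1)).sub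
          continuousOn_id).pow 2)))
      (fun y hy => (hder y hy).hasDerivWithinAt) hint
    rw [h]; ring
  -- identify interval integrals with μ-integrals
  have hAeq : (∫ y in (0:ℝ)..1, (r y - y) ^ 2) = ∫ y, u y ^ 2 ∂μ := by
    rw [intervalIntegral.integral_of_le zero_le_one, hμ,
      ← MeasureTheory.integral_Icc_eq_integral_Ioc]
  have hBeq : (∫ y in (0:ℝ)..1, y ^ 2 * (deriv r y - 1) ^ 2) = ∫ y, v y ^ 2 ∂μ := by
    rw [intervalIntegral.integral_of_le zero_le_one, hμ,
      ← MeasureTheory.integral_Icc_eq_integral_Ioc]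
    congr 1; funext y; simp [hv, mul_pow]
  have habs_eq : (∫ y in (0:ℝ)..1, |u y| * |v y|) = ∫ y, |u y| * |v y| ∂μ := by
    rw [intervalIntegral.integral_of_le zero_le_one, hμ,
      ← MeasureTheory.integral_Icc_eq_integral_Ioc]
  -- main estimate
  rw [← hftc, hAeq, hBeq]
  have step1 : (∫ y in (0:ℝ)..x, (u y ^ 2 + 2 * (v y * u y)))
      = (∫ y in (0:ℝ)..x, u y ^ 2) + 2 * ∫ y in (0:ℝ)..x, v y * u y := by
    rw [intervalIntegral.integral_add hi1x (hiuvx.const_mul 2),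
      intervalIntegral.integral_const_mul]
  rw [step1]
  have b1 : (∫ y in (0:ℝ)..x, u y ^ 2) ≤ ∫ y, u y ^ 2 ∂μ := by
    rw [← hAeq]
    exact intervalIntegral.integral_mono_interval le_rfl hx0 hx1
      (Filter.Eventually.of_forall fun y => sq_nonneg _)
      ((intervalIntegrable_iff_integrableOn_Ioc_of_le zero_le_one).2
        (h1on.mono_set Ioc_subset_Icc_self))
  have b2 : (∫ y in (0:ℝ)..x, v y * u y) ≤ ∫ y, |u y| * |v y| ∂μ := by
    calc ∫ y in (0:ℝ)..x, v y * u y ≤ ∫ y in (0:ℝ)..x, |u y| * |v y| := by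
          apply intervalIntegral.integral_mono_on hx0 hiuvx hiabsx
          intro y _
          calc v y * u y ≤ |v y * u y| := le_abs_self _
            _ = |u y| * |v y| := by rw [abs_mul (v y) (u y), mul_comm]
      _ ≤ ∫ y in (0:ℝ)..1, |u y| * |v y| :=
          intervalIntegral.integral_mono_interval le_rfl hx0 hx1
            (Filter.Eventually.of_forall fun y => mul_nonneg (abs_nonneg _) (abs_nonneg _))
            hiabs
      _ = ∫ y, |u y| * |v y| ∂μ := habs_eq
  calc (∫ y in (0:ℝ)..x, u y ^ 2) + 2 * ∫ y in (0:ℝ)..x, v y * u y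
      ≤ (∫ y, u y ^ 2 ∂μ) + 2 * ∫ y, |u y| * |v y| ∂μ := by
        gcongr
    _ ≤ (∫ y, u y ^ 2 ∂μ) + 2 * (Real.sqrt (∫ y, u y ^ 2 ∂μ) * Real.sqrt (∫ y, v y ^ 2 ∂μ)) := by
        gcongr
    _ = (∫ y, u y ^ 2 ∂μ) + 2 * Real.sqrt (∫ y, u y ^ 2 ∂μ) * Real.sqrt (∫ y, v y ^ 2 ∂μ) := by
        ring
end

section
/- Let $w : [0,1] \to \mathbb{R}$ be continuously differentiable with $w \ge 0$, $w' \le 0$ on $[0,1]$, and $w(1) = 0$. Let $r : [0,1] \to \mathbb{R}$ be continuously differentiable with $r(0) = 0$, and suppose there is $\epsilon_0 \in (0, 1/2]$ sufficiently small such that $|r'(x) - 1| \le \epsilon_0$ and $|r(x)/x - 1| \le \epsilon_0$ for all $x \in (0,1]$. Define $\mathfrak{Q}(x) = \frac{x^2}{r(x)^2 r'(x)} - 1$. Then $$\int_0^1 w(x)\left[ 4\left(\frac{r(x)}{x} - 1\right)^2 + (r'(x)-1)^2 \right] dx \le 2 \int_0^1 w(x)\, \mathfrak{Q}(x)^2\,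 dx.$$ -/
open MeasureTheory Set intervalIntegral

set_option maxHeartbeats 1000000 in
lemma key_poly (a b : ℝ) (ha1 : -(1/100) ≤ a) (ha2 : a ≤ 1/100)
    (hb1 : -(1/100) ≤ b) (hb2 : b ≤ 1/100) :
    (4*a^2 + 8*a*b + b^2) * ((1+a)^2*(1+b))^2 ≤ 2*(1-(1+a)^2*(1+b))^2 := by
  have hpa : (0:ℝ) < 1 + a := by linarith
  have hpb : (0:ℝ) < 1 + b := by linarith
  have hDnn : (0:ℝ) ≤ (1+a)^2*(1+b) := by positivity
  have hDle : (1+a)^2*(1+b) ≤ 1030301/1000000 := by nlinarith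
  have hD2 : ((1+a)^2*(1+b))^2 ≤ 107/100 := by nlinarith
  by_cases hL : 4*a^2 + 8*a*b + b^2 ≤ 0
  · nlinarith [sq_nonneg (1-(1+a)^2*(1+b)), sq_nonneg ((1+a)^2*(1+b))]
  · push_neg at hL
    have h1 : (4*a^2 + 8*a*b + b^2) * ((1+a)^2*(1+b))^2
        ≤ (4*a^2 + 8*a*b + b^2) * (107/100) := by
      nlinarith [hL, hD2]
    refine h1.trans ?_
    have he : 1-(1+a)^2*(1+b) = -((2*a+b) + (a^2+2*a*b+a^2*b)) := by ring
    rw [he]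
    nlinarith [sq_nonneg (2*a+b), sq_nonneg (a^2+2*a*b+a^2*b), sq_nonneg (a-b),
      sq_nonneg (a+b),
      mul_nonneg (mul_nonneg (sub_nonneg.2 ha2) (sub_nonneg.2 hb2)) (sq_nonneg (2*a+b)),
      sq_nonneg (a*(2*a+b)), sq_nonneg (b*(2*a+b))]

lemma key_alg (a b : ℝ) (ha : |a| ≤ 1/100) (hb : |b| ≤ 1/100) :
    4*a^2 + 8*a*b + b^2 ≤ 2*(1/((1+a)^2*(1+b)) - 1)^2 := by
  have ha1 := neg_le_of_abs_le ha
  have ha2 := le_of_abs_le ha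
  have hb1 := neg_le_of_abs_le hb
  have hb2 := le_of_abs_le hb
  have hpa : (0:ℝ) < 1 + a := by linarith
  have hpb : (0:ℝ) < 1 + b := by linarith
  have h1 : 1/((1+a)^2*(1+b)) - 1 = (1-(1+a)^2*(1+b))/((1+a)^2*(1+b)) := by
    field_simp
  rw [h1, div_pow, ← mul_div_assoc, le_div_iff₀ (by positivity)]
  have := key_poly a b ha1 ha2 hb1 hb2
  linarith

lemma bdd_integrableOn {f : ℝ → ℝ} {C : ℝ} (hf : ContinuousOn f (Ioo 0 1))
    (hC : ∀ x ∈ Ioo (0:ℝ) 1, |f x| ≤ C) : IntegrableOn f (Ioc 0 1) volume := by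
  have h1 : IntegrableOn f (Ioo 0 1) volume := by
    have hm : AEStronglyMeasurable f (volume.restrict (Ioo 0 1)) :=
      hf.aestronglyMeasurable measurableSet_Ioo
    refine Integrable.mono' (g := fun _ => C) (integrable_const C) hm ?_
    filter_upwards [ae_restrict_mem measurableSet_Ioo] with x hx using hC x hx
  exact h1.congr_set_ae (MeasureTheory.Ioo_ae_eq_Ioc).symm

lemma abs_mul_le_of_le_one {u v C : ℝ} (hu : |u| ≤ C) (hv : |v| ≤ 1) : |u * v| ≤ C := by
  rw [abs_mul]
  calc |u| * |v| ≤ C * 1 := mul_le_mul hu hv (abs_nonneg v) (le_trans (abs_nonneg u) hu)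
    _ = C := mul_one C

set_option maxHeartbeats 2000000 in
theorem Q_controls_rx :
    ∃ ε₀ : ℝ, 0 < ε₀ ∧ ε₀ ≤ 1/2 ∧
      ∀ w r : ℝ → ℝ,
        ContDiffOn ℝ 1 w (Icc 0 1) →
        (∀ x ∈ Icc (0:ℝ) 1, 0 ≤ w x) →
        (∀ x ∈ Icc (0:ℝ) 1, deriv w x ≤ 0) →
        w 1 = 0 →
        ContDiffOn ℝ 1 r (Icc 0 1) →
        r 0 = 0 →
        (∀ x ∈ Ioc (0:ℝ) 1, |deriv r x - 1| ≤ ε₀) →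
        (∀ x ∈ Ioc (0:ℝ) 1, |r x / x - 1| ≤ ε₀) →
        ∫ x in (0:ℝ)..1, w x * (4 * (r x / x - 1) ^ 2 + (deriv r x - 1) ^ 2)
          ≤ 2 * ∫ x in (0:ℝ)..1, w x * (x ^ 2 / ((r x) ^ 2 * deriv r x) - 1) ^ 2 := by
  refine ⟨1/100, by norm_num, by norm_num, ?_⟩
  intro w r hw hw0 hw' hw1 hr hr0 hrb hra
  have hIoo_Icc : (Ioo (0:ℝ) 1) ⊆ Icc 0 1 := Ioo_subset_Icc_self
  have hIoo_Ioc : (Ioo (0:ℝ) 1) ⊆ Ioc 0 1 := Ioo_subset_Ioc_self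
  -- derivatives on Ioo
  have hwd : ∀ x ∈ Ioo (0:ℝ) 1, HasDerivAt w (deriv w x) x := by
    intro x hx
    exact ((hw.differentiableOn one_ne_zero x (hIoo_Icc hx)).differentiableAt
      (Icc_mem_nhds hx.1 hx.2)).hasDerivAt
  have hrd : ∀ x ∈ Ioo (0:ℝ) 1, HasDerivAt r (deriv r x) x := by
    intro x hx
    exact ((hr.differentiableOn one_ne_zero x (hIoo_Icc hx)).differentiableAt
      (Icc_mem_nhds hx.1 hx.2)).hasDerivAt
  -- continuity of derivatives on Ioo
  have hwdc : ContinuousOn (deriv w) (Ioo 0 1) := by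
    refine ((hw.continuousOn_derivWithin (uniqueDiffOn_Icc one_pos) le_rfl).mono
      hIoo_Icc).congr fun x hx => ?_
    exact (derivWithin_of_mem_nhds (Icc_mem_nhds hx.1 hx.2)).symm
  have hrdc : ContinuousOn (deriv r) (Ioo 0 1) := by
    refine ((hr.continuousOn_derivWithin (uniqueDiffOn_Icc one_pos) le_rfl).mono
      hIoo_Icc).congr fun x hx => ?_
    exact (derivWithin_of_mem_nhds (Icc_mem_nhds hx.1 hx.2)).symm
  -- bounds
  obtain ⟨Cw, hCw⟩ := isCompact_Icc.exists_bound_of_continuousOn hw.continuousOn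
  have hCw : ∀ x ∈ Icc (0:ℝ) 1, |w x| ≤ Cw := by
    intro x hx; simpa [Real.norm_eq_abs] using hCw x hx
  have hCw0 : 0 ≤ Cw := le_trans (abs_nonneg _) (hCw 0 (by norm_num))
  obtain ⟨Cw', hCw'0⟩ := isCompact_Icc.exists_bound_of_continuousOn
    (hw.continuousOn_derivWithin (uniqueDiffOn_Icc one_pos) le_rfl)
  have hCw' : ∀ x ∈ Ioo (0:ℝ) 1, |deriv w x| ≤ Cw' := by
    intro x hx
    have := hCw'0 x (hIoo_Icc hx)
    rwa [derivWithin_of_mem_nhds (Icc_mem_nhds hx.1 hx.2), Real.norm_eq_abs] at this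
  have hCw'nn : 0 ≤ Cw' := le_trans (norm_nonneg _) (hCw'0 (1/2) (by norm_num))
  -- pointwise facts on Ioc
  have hrpos : ∀ x ∈ Ioc (0:ℝ) 1, 0 < r x := by
    intro x hx
    have h1 := neg_le_of_abs_le (hra x hx)
    have h2 : (0:ℝ) < r x / x := by linarith
    have := mul_pos h2 hx.1
    rwa [div_mul_cancel₀ _ (ne_of_gt hx.1)] at this
  have hdpos : ∀ x ∈ Ioc (0:ℝ) 1, 0 < deriv r x := by
    intro x hx
    have h1 := neg_le_of_abs_le (hrb x hx)
    linarith
  -- the identity between Q and the normalized form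
  have hQid : ∀ x ∈ Ioc (0:ℝ) 1,
      x ^ 2 / ((r x) ^ 2 * deriv r x) - 1
        = 1/((1 + (r x / x - 1))^2 * (1 + (deriv r x - 1))) - 1 := by
    intro x hx
    have hx0 : x ≠ 0 := ne_of_gt hx.1
    have hr0' : r x ≠ 0 := ne_of_gt (hrpos x hx)
    have hd0 : deriv r x ≠ 0 := ne_of_gt (hdpos x hx)
    have : 1 + (r x / x - 1) = r x / x := by ring
    rw [this]
    have : 1 + (deriv r x - 1) = deriv r x := by ring
    rw [this]
    field_simp
  -- |Q| ≤ 1 on Ioc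
  have hQb : ∀ x ∈ Ioc (0:ℝ) 1, |x ^ 2 / ((r x) ^ 2 * deriv r x) - 1| ≤ 1 := by
    intro x hx
    rw [hQid x hx]
    have ha1 := neg_le_of_abs_le (hra x hx)
    have ha2 := le_of_abs_le (hra x hx)
    have hb1 := neg_le_of_abs_le (hrb x hx)
    have hb2 := le_of_abs_le (hrb x hx)
    set D := (1 + (r x / x - 1))^2 * (1 + (deriv r x - 1)) with hD
    have hD1 : 1/2 ≤ D := by rw [hD]; nlinarith
    have hD2 : D ≤ 2 := by rw [hD]; nlinarith
    have hDpos : 0 < D := by linarith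
    have h1 : 1/D ≤ 2 := by
      rw [div_le_iff₀ hDpos]; linarith
    have h2 : 1/2 ≤ 1/D := by
      rw [le_div_iff₀ hDpos]; linarith
    rw [abs_le]; constructor <;> linarith
  -- pointwise main inequality on Ioc
  have hpt : ∀ x ∈ Ioc (0:ℝ) 1,
      w x * (4 * (r x / x - 1) ^ 2 + (deriv r x - 1) ^ 2)
        ≤ 2 * (w x * (x ^ 2 / ((r x) ^ 2 * deriv r x) - 1) ^ 2)
          - 8 * (w x * (r x / x - 1) * (deriv r x - 1)) := by
    intro x hx
    have hk := key_alg (r x / x - 1) (deriv r x - 1) (hra x hx) (hrb x hx)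
    have hwnn := hw0 x (Ioc_subset_Icc_self hx)
    have := mul_le_mul_of_nonneg_left hk hwnn
    rw [hQid x hx]
    nlinarith [this]
  -- integrability
  have hAc : ContinuousOn (fun x => r x / x - 1) (Ioo 0 1) :=
    ((hr.continuousOn.mono hIoo_Icc).div continuousOn_id
      fun x hx => ne_of_gt hx.1).sub continuousOn_const
  have hBc : ContinuousOn (fun x => deriv r x - 1) (Ioo 0 1) :=
    hrdc.sub continuousOn_const
  have hwc : ContinuousOn w (Ioo 0 1) := hw.continuousOn.mono hIoo_Icc
  have hQc : ContinuousOn (fun x => x ^ 2 / ((r x) ^ 2 * deriv r x) - 1) (Ioo 0 1) := by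
    refine (((continuous_pow 2).continuousOn.div
      (((hr.continuousOn.mono hIoo_Icc).pow 2).mul hrdc) ?_).sub continuousOn_const)
    intro x hx
    have := hrpos x (hIoo_Ioc hx)
    have := hdpos x (hIoo_Ioc hx)
    exact (mul_pos (pow_pos ‹0 < r x› 2) ‹0 < deriv r x›).ne'
  have intg1 : IntegrableOn
      (fun x => w x * (4 * (r x / x - 1) ^ 2 + (deriv r x - 1) ^ 2)) (Ioc 0 1) volume := by
    refine bdd_integrableOn (hwc.mul ((continuousOn_const.mul (hAc.pow 2)).add (hBc.pow 2))) (C := Cw) ?_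
    intro x hx
    have ha := abs_le.1 (hra x (hIoo_Ioc hx))
    have hb := abs_le.1 (hrb x (hIoo_Ioc hx))
    have hwb := hCw x (hIoo_Icc hx)
    have hE : |4 * (r x / x - 1) ^ 2 + (deriv r x - 1) ^ 2| ≤ 1 := by
      rw [abs_of_nonneg (by positivity)]
      nlinarith [ha.1, ha.2, hb.1, hb.2]
    exact abs_mul_le_of_le_one hwb hE
  have intg2 : IntegrableOn
      (fun x => w x * (x ^ 2 / ((r x) ^ 2 * deriv r x) - 1) ^ 2) (Ioc 0 1) volume := by
    refine bdd_integrableOn (hwc.mul (hQc.pow 2)) (C := Cw) ?_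
    intro x hx
    have hq := hQb x (hIoo_Ioc hx)
    have hwb := hCw x (hIoo_Icc hx)
    have hE : |(x ^ 2 / ((r x) ^ 2 * deriv r x) - 1) ^ 2| ≤ 1 := by
      rw [abs_of_nonneg (sq_nonneg _), ← sq_abs]
      nlinarith [abs_nonneg (x ^ 2 / ((r x) ^ 2 * deriv r x) - 1)]
    exact abs_mul_le_of_le_one hwb hE
  have intf : IntegrableOn
      (fun x => w x * (r x / x - 1) * (deriv r x - 1)) (Ioc 0 1) volume := by
    refine bdd_integrableOn ((hwc.mul hAc).mul hBc) (C := Cw) ?_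
    intro x hx
    have ha := hra x (hIoo_Ioc hx)
    have hb := hrb x (hIoo_Ioc hx)
    have hwb := hCw x (hIoo_Icc hx)
    rw [mul_assoc]
    refine abs_mul_le_of_le_one hwb ?_
    rw [abs_mul]
    calc |r x / x - 1| * |deriv r x - 1| ≤ (1/100) * (1/100) :=
          mul_le_mul ha hb (abs_nonneg _) (by norm_num)
      _ ≤ 1 := by norm_num
  have intn : IntegrableOn
      (fun x => -(deriv w x) * x * (r x / x - 1) ^ 2 / 2 + w x * (r x / x - 1) ^ 2 / 2)
      (Ioc 0 1) volume := by
    refine bdd_integrableOn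
      ((((hwdc.neg.mul continuousOn_id).mul (hAc.pow 2)).div_const 2).add
        ((hwc.mul (hAc.pow 2)).div_const 2)) (C := Cw' + Cw) ?_
    intro x hx
    have ha := abs_le.1 (hra x (hIoo_Ioc hx))
    have hwb := hCw x (hIoo_Icc hx)
    have hwb' := hCw' x hx
    have hx1 : 0 < x := hx.1
    have hx2 : x < 1 := hx.2
    have hA2 : (r x / x - 1) ^ 2 ≤ 1 := by nlinarith [ha.1, ha.2]
    have e1 : -(deriv w x) * x * (r x / x - 1) ^ 2 / 2
        = deriv w x * (-(x * (r x / x - 1) ^ 2) / 2) := by ring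
    have b1 : |deriv w x * (-(x * (r x / x - 1) ^ 2) / 2)| ≤ Cw' := by
      refine abs_mul_le_of_le_one hwb' ?_
      rw [abs_div, abs_neg, abs_of_nonneg (by positivity : (0:ℝ) ≤ x * (r x / x - 1) ^ 2)]
      rw [abs_of_nonneg (by norm_num : (0:ℝ) ≤ 2)]
      rw [div_le_one (by norm_num : (0:ℝ) < 2)]
      nlinarith [sq_nonneg (r x / x - 1)]
    have b2 : |w x * (r x / x - 1) ^ 2 / 2| ≤ Cw := by
      rw [mul_div_assoc]
      refine abs_mul_le_of_le_one hwb ?_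
      rw [abs_div, abs_of_nonneg (sq_nonneg _), abs_of_nonneg (by norm_num : (0:ℝ) ≤ 2)]
      rw [div_le_one (by norm_num : (0:ℝ) < 2)]
      linarith
    calc |(-(deriv w x) * x * (r x / x - 1) ^ 2 / 2 + w x * (r x / x - 1) ^ 2 / 2)|
        ≤ |(-(deriv w x) * x * (r x / x - 1) ^ 2 / 2)| + |w x * (r x / x - 1) ^ 2 / 2| :=
          abs_add_le _ _
      _ ≤ Cw' + Cw := by rw [e1]; exact add_le_add b1 b2
  -- interval integrability
  have intfI : IntervalIntegrable
      (fun x => w x * (r x / x - 1) * (deriv r x - 1)) volume 0 1 :=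
    (intervalIntegrable_iff_integrableOn_Ioc_of_le zero_le_one).2 intf
  have intnI : IntervalIntegrable
      (fun x => -(deriv w x) * x * (r x / x - 1) ^ 2 / 2 + w x * (r x / x - 1) ^ 2 / 2)
      volume 0 1 :=
    (intervalIntegrable_iff_integrableOn_Ioc_of_le zero_le_one).2 intn
  -- the integration by parts: the cross term has nonnegative integral
  have hcross : 0 ≤ ∫ x in (0:ℝ)..1, w x * (r x / x - 1) * (deriv r x - 1) := by
    set H : ℝ → ℝ := fun y => w y * (r y - y)^2 / (2*y) with hHdef
    -- continuity of H on Icc 0 1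
    have hHcont : ContinuousOn H (Icc 0 1) := by
      intro x hx
      rcases eq_or_ne x 0 with rfl | hx0
      · -- continuity at 0 by squeeze
        have hH0 : H 0 = 0 := by simp [hHdef, hr0]
        rw [ContinuousWithinAt, hH0]
        apply squeeze_zero_norm' (a := fun t => Cw * t / 20000)
        · filter_upwards [self_mem_nhdsWithin] with t ht
          rcases eq_or_ne t 0 with rfl | ht0
          · simp [hHdef, hr0]
          · have ht1 : 0 < t := lt_of_le_of_ne ht.1 (Ne.symm ht0)
            have ha := hra t ⟨ht1, ht.2⟩
            have hwb := hCw t ht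
            have hrt : |r t - t| ≤ t/100 := by
              have : r t - t = (r t / t - 1) * t := by field_simp
              rw [this, abs_mul, abs_of_pos ht1]
              calc |r t / t - 1| * t ≤ (1/100) * t := by
                    exact mul_le_mul_of_nonneg_right ha (le_of_lt ht1)
                _ = t / 100 := by ring
            have hsq : (r t - t)^2 ≤ (t/100)^2 := by
              rw [← sq_abs]; exact pow_le_pow_left₀ (abs_nonneg _) hrt 2
            rw [hHdef]
            simp only [Real.norm_eq_abs]
            rw [abs_div, abs_mul, abs_of_pos (by linarith : (0:ℝ) < 2*t)]
            rw [div_le_iff₀ (by linarith : (0:ℝ) < 2*t)]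
            calc |w t| * |(r t - t)^2| ≤ Cw * (t/100)^2 := by
                  rw [abs_of_nonneg (sq_nonneg (r t - t))]
                  exact mul_le_mul hwb hsq (sq_nonneg _) hCw0
              _ ≤ Cw * t / 20000 * (2*t) := by nlinarith [ht.2]
        · have : Filter.Tendsto (fun t : ℝ => Cw * t / 20000) (nhds 0)
              (nhds (Cw * 0 / 20000)) := by
            exact Filter.Tendsto.div_const (tendsto_const_nhds.mul Filter.tendsto_id) _
          simp only [mul_zero, zero_div] at this
          exact this.mono_left nhdsWithin_le_nhds
      · have hx1 : 0 < x := lt_of_le_of_ne hx.1 (Ne.symm hx0)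
        exact ((hw.continuousOn x hx).mul
          (((hr.continuousOn x hx).sub (continuousOn_id x hx)).pow 2)).div
          ((continuousOn_const.mul continuousOn_id) x hx) (by positivity)
    -- derivative of H on Ioo
    have hHd : ∀ x ∈ Ioo (0:ℝ) 1, HasDerivAt H
        (w x * (r x / x - 1) * (deriv r x - 1)
          - (-(deriv w x) * x * (r x / x - 1) ^ 2 / 2 + w x * (r x / x - 1) ^ 2 / 2)) x := by
      intro x hx
      have hx0 : x ≠ 0 := ne_of_gt hx.1
      have h1 : HasDerivAt (fun y => r y - y) (deriv r x - 1) x :=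
        (hrd x hx).sub (hasDerivAt_id x)
      have h2 : HasDerivAt (fun y => (r y - y)^2) (2*(r x - x)*(deriv r x - 1)) x := by
        have := h1.fun_pow 2
        refine this.congr_deriv ?_; push_cast; ring
      have h3 := (hwd x hx).fun_mul h2
      have h4 : HasDerivAt (fun y : ℝ => 2*y) 2 x := by
        simpa using (hasDerivAt_id x).const_mul (2:ℝ)
      have h5 := h3.fun_div h4 (by positivity : (2:ℝ)*x ≠ 0)
      refine h5.congr_deriv ?_
      field_simp
      ring
    have hFTC : ∫ x in (0:ℝ)..1,
        (w x * (r x / x - 1) * (deriv r x - 1)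
          - (-(deriv w x) * x * (r x / x - 1) ^ 2 / 2 + w x * (r x / x - 1) ^ 2 / 2))
        = H 1 - H 0 :=
      integral_eq_sub_of_hasDerivAt_of_le zero_le_one hHcont hHd (intfI.sub intnI)
    have hH10 : H 1 - H 0 = 0 := by simp [hHdef, hw1, hr0]
    have hnn : 0 ≤ ∫ x in (0:ℝ)..1,
        (-(deriv w x) * x * (r x / x - 1) ^ 2 / 2 + w x * (r x / x - 1) ^ 2 / 2) := by
      apply intervalIntegral.integral_nonneg zero_le_one
      intro u hu
      have h1 : 0 ≤ -(deriv w u) * u * (r u / u - 1) ^ 2 / 2 := by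
        apply div_nonneg _ (by norm_num)
        exact mul_nonneg (mul_nonneg (neg_nonneg.2 (hw' u hu)) hu.1) (sq_nonneg _)
      have h2 : 0 ≤ w u * (r u / u - 1) ^ 2 / 2 := by
        apply div_nonneg _ (by norm_num)
        exact mul_nonneg (hw0 u hu) (sq_nonneg _)
      linarith
    rw [intervalIntegral.integral_sub intfI intnI] at hFTC
    linarith [hFTC, hH10, hnn]
  -- assemble
  rw [intervalIntegral.integral_of_le zero_le_one, intervalIntegral.integral_of_le zero_le_one]
  have step1 : ∫ x in Ioc (0:ℝ) 1, w x * (4 * (r x / x - 1) ^ 2 + (deriv r x - 1) ^ 2)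
      ≤ ∫ x in Ioc (0:ℝ) 1,
        (2 * (w x * (x ^ 2 / ((r x) ^ 2 * deriv r x) - 1) ^ 2)
          - 8 * (w x * (r x / x - 1) * (deriv r x - 1))) := by
    exact setIntegral_mono_on intg1 ((intg2.const_mul 2).sub (intf.const_mul 8))
      measurableSet_Ioc hpt
  have step2 : ∫ x in Ioc (0:ℝ) 1,
        (2 * (w x * (x ^ 2 / ((r x) ^ 2 * deriv r x) - 1) ^ 2)
          - 8 * (w x * (r x / x - 1) * (deriv r x - 1)))
      = 2 * (∫ x in Ioc (0:ℝ) 1, w x * (x ^ 2 / ((r x) ^ 2 * deriv r x) - 1) ^ 2)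
        - 8 * (∫ x in Ioc (0:ℝ) 1, w x * (r x / x - 1) * (deriv r x - 1)) := by
    rw [integral_sub (intg2.const_mul 2) (intf.const_mul 8),
      MeasureTheory.integral_const_mul, MeasureTheory.integral_const_mul]
  have hcross' : 0 ≤ ∫ x in Ioc (0:ℝ) 1, w x * (r x / x - 1) * (deriv r x - 1) := by
    rwa [intervalIntegral.integral_of_le zero_le_one] at hcross
  linarith [step1, step2.le, step2.ge, hcross']
end

section
/- Let $w : [0,1] \to \mathbb{R}$ be continuously differentiable with $w \ge 0$, $w' \le 0$ on $[0,1]$. Let $f : [0,1] \to \mathbb{R}$ be continuously differentiable. Then $$\int_0^1 w(x) \left[ 2 f(x) + x f'(x) \right] f(x)\, dx \ge 0.$$ -/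
open MeasureTheory Set intervalIntegral Topology

theorem sign_observation (w f : ℝ → ℝ)
    (hw : ContDiffOn ℝ 1 w (Icc 0 1))
    (hw0 : ∀ x ∈ Icc (0:ℝ) 1, 0 ≤ w x)
    (hw' : ∀ x ∈ Icc (0:ℝ) 1, deriv w x ≤ 0)
    (hf : ContDiffOn ℝ 1 f (Icc 0 1)) :
    0 ≤ ∫ x in (0:ℝ)..1, w x * (2 * f x + x * deriv f x) * f x := by
  have huniq : UniqueDiffOn ℝ (Icc (0:ℝ) 1) := uniqueDiffOn_Icc one_pos
  set W' : ℝ → ℝ := derivWithin w (Icc 0 1) with hW'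
  set F' : ℝ → ℝ := derivWithin f (Icc 0 1) with hF'
  have hWc : ContinuousOn W' (Icc 0 1) := hw.continuousOn_derivWithin huniq le_rfl
  have hFc : ContinuousOn F' (Icc 0 1) := hf.continuousOn_derivWithin huniq le_rfl
  have hwc : ContinuousOn w (Icc 0 1) := hw.continuousOn
  have hfc : ContinuousOn f (Icc 0 1) := hf.continuousOn
  have hIcc : Set.uIcc (0:ℝ) 1 = Icc (0:ℝ) 1 := uIcc_of_le zero_le_one
  -- derivatives at interior points
  have hwD : ∀ x ∈ Ioo (0:ℝ) 1, HasDerivAt w (W' x) x ∧ W' x = deriv w x := by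
    intro x hx
    have hmem : Icc (0:ℝ) 1 ∈ 𝓝 x := Icc_mem_nhds hx.1 hx.2
    have hd := (hw.differentiableOn one_ne_zero x (Ioo_subset_Icc_self hx)).differentiableAt hmem
    have he : W' x = deriv w x := derivWithin_of_mem_nhds hmem
    exact ⟨he ▸ hd.hasDerivAt, he⟩
  have hfD : ∀ x ∈ Ioo (0:ℝ) 1, HasDerivAt f (F' x) x ∧ F' x = deriv f x := by
    intro x hx
    have hmem : Icc (0:ℝ) 1 ∈ 𝓝 x := Icc_mem_nhds hx.1 hx.2
    have hd := (hf.differentiableOn one_ne_zero x (Ioo_subset_Icc_self hx)).differentiableAt hmem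
    have he : F' x = deriv f x := derivWithin_of_mem_nhds hmem
    exact ⟨he ▸ hd.hasDerivAt, he⟩
  -- integrability helpers
  have hintJ : IntervalIntegrable
      (fun x => W' x * x * f x ^ 2 + w x * f x ^ 2 + 2 * (w x * x * F' x * f x))
      volume 0 1 := by
    apply ContinuousOn.intervalIntegrable
    rw [hIcc]
    exact ((hWc.mul continuousOn_id).mul (hfc.pow 2)).add
      (hwc.mul (hfc.pow 2)) |>.add
      (continuousOn_const.mul (((hwc.mul continuousOn_id).mul hFc).mul hfc))
  have hintK : IntervalIntegrable
      (fun x => 3 * (w x * f x ^ 2) - W' x * x * f x ^ 2) volume 0 1 := by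
    apply ContinuousOn.intervalIntegrable
    rw [hIcc]
    exact (continuousOn_const.mul (hwc.mul (hfc.pow 2))).sub
      ((hWc.mul continuousOn_id).mul (hfc.pow 2))
  -- FTC for g x = w x * x * f x ^ 2
  have hJ : (∫ x in (0:ℝ)..1,
      (W' x * x * f x ^ 2 + w x * f x ^ 2 + 2 * (w x * x * F' x * f x)))
      = w 1 * f 1 ^ 2 := by
    have := intervalIntegral.integral_eq_sub_of_hasDerivAt_of_le zero_le_one
      (f := fun x => w x * x * f x ^ 2)
      (f' := fun x => W' x * x * f x ^ 2 + w x * f x ^ 2 + 2 * (w x * x * F' x * f x))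
      (by exact (hwc.mul continuousOn_id).mul (hfc.pow 2))
      (fun x hx => by
        have h1 := (hwD x hx).1
        have h2 := (hfD x hx).1
        have := (h1.mul (hasDerivAt_id x)).mul (h2.pow 2)
        refine this.congr_deriv ?_
        simp only [Nat.add_sub_cancel, pow_one, id_eq, Pi.mul_apply, Pi.pow_apply]
        ring)
      hintJ
    simpa using this
  -- nonnegativity of K
  have hK : 0 ≤ ∫ x in (0:ℝ)..1, (3 * (w x * f x ^ 2) - W' x * x * f x ^ 2) := by
    apply intervalIntegral.integral_nonneg_of_ae_restrict zero_le_one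
    have h1 : ∀ᵐ x : ℝ ∂(volume.restrict (Icc (0:ℝ) 1)), x ≠ 1 := by
      apply ae_restrict_of_ae
      rw [ae_iff]
      have : {x : ℝ | ¬x ≠ 1} = {1} := by ext x; simp
      rw [this]
      exact measure_singleton 1
    filter_upwards [ae_restrict_mem measurableSet_Icc, h1] with x hx hx1
    simp only [Pi.zero_apply]
    rcases eq_or_lt_of_le hx.1 with h0 | h0
    · have hx0 : x = 0 := h0.symm
      subst hx0
      have := hw0 0 (by constructor <;> norm_num)
      nlinarith [sq_nonneg (f 0)]
    · have hxIoo : x ∈ Ioo (0:ℝ) 1 := ⟨h0, lt_of_le_of_ne hx.2 hx1⟩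
      have hW : W' x ≤ 0 := (hwD x hxIoo).2 ▸ hw' x hx
      have hw0x := hw0 x hx
      have h2 := mul_nonneg (mul_nonneg (neg_nonneg.2 hW) hxIoo.1.le) (sq_nonneg (f x))
      nlinarith [mul_nonneg hw0x (sq_nonneg (f x))]
  -- rewrite the target integral using F'
  have hcongr : (∫ x in (0:ℝ)..1, w x * (2 * f x + x * deriv f x) * f x)
      = ∫ x in (0:ℝ)..1, w x * (2 * f x + x * F' x) * f x := by
    apply intervalIntegral.integral_congr_ae
    have h1 : ∀ᵐ x : ℝ ∂volume, x ≠ 1 := by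
      rw [ae_iff]
      have : {x : ℝ | ¬x ≠ 1} = {1} := by ext x; simp
      rw [this]
      exact measure_singleton 1
    filter_upwards [h1] with x hx1 hx
    rw [Set.uIoc_of_le zero_le_one] at hx
    have hxIoo : x ∈ Ioo (0:ℝ) 1 := ⟨hx.1, lt_of_le_of_ne hx.2 hx1⟩
    rw [(hfD x hxIoo).2]
  rw [hcongr]
  -- key pointwise identity and conclusion
  have hkey : (fun x => (2:ℝ) * (w x * (2 * f x + x * F' x) * f x))
      = fun x => (W' x * x * f x ^ 2 + w x * f x ^ 2 + 2 * (w x * x * F' x * f x))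
        + (3 * (w x * f x ^ 2) - W' x * x * f x ^ 2) := by
    funext x; ring
  have h2I : (2:ℝ) * ∫ x in (0:ℝ)..1, w x * (2 * f x + x * F' x) * f x
      = (∫ x in (0:ℝ)..1,
          (W' x * x * f x ^ 2 + w x * f x ^ 2 + 2 * (w x * x * F' x * f x)))
        + ∫ x in (0:ℝ)..1, (3 * (w x * f x ^ 2) - W' x * x * f x ^ 2) := by
    rw [← intervalIntegral.integral_add hintJ hintK, ← intervalIntegral.integral_const_mul]
    exact intervalIntegral.integral_congr fun x _ => congrFun hkey x
  have hw1 : 0 ≤ w 1 * f 1 ^ 2 :=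
    mul_nonneg (hw0 1 (by constructor <;> norm_num)) (sq_nonneg _)
  nlinarith [hJ ▸ h2I, hK, hw1]
end
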